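/- Let A ∈ ℝ^{M×M}, D ∈ ℝ^{N×N}, G ∈ ℝ^{M×N}, X ∈ ℝ^{M×N}, and h > 0. Let S be the Sylvester operator S(Y) = A·Y + Y·D on ℝ^{M×N}, and let 𝔸 ∈ ℝ^{(M+N)×(M+N)} be the block matrix [[A, G], [0, −D]]. Then e^{hS}(X) + h·φ_1(hS)(G) = ( [I_M, 0] · e^{h𝔸} · [X; I_N] ) · e^{hD}, where [I_M, 0] ∈ ℝ^{M×(M+N)} and [X; I_N] ∈ ℝ^{(M+N)×N} is the block column matrix with blocks X and I_N. -/

import Mathlib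

set_option linter.unusedSectionVars false
set_option synthInstance.maxHeartbeats 1000000
set_option maxHeartbeats 1000000
open MeasureTheory intervalIntegral Matrix

attribute [local instance] Matrix.normedAddCommGroup Matrix.normedSpace

section NormTop

attribute [-instance] instTopologicalSpaceMatrix Matrix.instUniformSpace

noncomputable def matNormTopRing {m : Type*} [Fintype m] [DecidableEq m] :
    IsTopologicalRing (Matrix m m ℝ) := by
  exact Matrix.topologicalRing

attribute [local instance] matNormTopRing

noncomputable instance clmRatNormedAlgebra {E : Type*} [NormedAddCommGroup E] [NormedSpace ℝ E] :
    NormedAlgebra ℚ (E →L[ℝ] E) :=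
  NormedAlgebra.restrictScalars ℚ ℝ _

section Helpers

open NormedSpace

variable {l m n : Type*} [Fintype l] [Fintype m] [Fintype n]

/-- Left multiplication by a fixed matrix, as a continuous linear map. -/
noncomputable def lmulC (n : Type*) [Fintype n] (P : Matrix l m ℝ) :
    Matrix m n ℝ →L[ℝ] Matrix l n ℝ :=
  LinearMap.toContinuousLinearMap
    { toFun := fun Y => P * Y
      map_add' := fun Y Z => Matrix.mul_add P Y Z
      map_smul' := fun r Y => by simp [Matrix.mul_smul] }

@[simp] lemma lmulC_apply (P : Matrix l m ℝ) (Y : Matrix m n ℝ) :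
    lmulC n P Y = P * Y := rfl

/-- Right multiplication by a fixed matrix, as a continuous linear map. -/
noncomputable def rmulC (l : Type*) [Fintype l] (B : Matrix m n ℝ) :
    Matrix l m ℝ →L[ℝ] Matrix l n ℝ :=
  LinearMap.toContinuousLinearMap
    { toFun := fun Y => Y * B
      map_add' := fun Y Z => Matrix.add_mul Y Z B
      map_smul' := fun r Y => by simp [Matrix.smul_mul] }

@[simp] lemma rmulC_apply (B : Matrix m n ℝ) (Y : Matrix l m ℝ) :
    rmulC l B Y = Y * B := rfl

lemma smul_lmulC [DecidableEq m] (t : ℝ) (P : Matrix l m ℝ) :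
    t • lmulC n P = lmulC n (t • P) := by
  ext Y : 1
  simp [Matrix.smul_mul]

lemma smul_rmulC (t : ℝ) (B : Matrix m n ℝ) :
    t • rmulC l B = rmulC l (t • B) := by
  ext Y : 1
  simp [Matrix.mul_smul]

lemma lmulC_pow [DecidableEq m] (B : Matrix m m ℝ) (k : ℕ) (Y : Matrix m n ℝ) :
    ((lmulC n B) ^ k) Y = B ^ k * Y := by
  induction k generalizing Y with
  | zero => simp
  | succ k ih =>
    rw [pow_succ, ContinuousLinearMap.mul_apply, lmulC_apply, ih, pow_succ, Matrix.mul_assoc]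

lemma rmulC_pow [DecidableEq m] (B : Matrix m m ℝ) (k : ℕ) (Y : Matrix l m ℝ) :
    ((rmulC l B) ^ k) Y = Y * B ^ k := by
  induction k generalizing Y with
  | zero => simp
  | succ k ih =>
    rw [pow_succ, ContinuousLinearMap.mul_apply, rmulC_apply, ih, pow_succ', Matrix.mul_assoc]

end Helpers

section ExpHelpers

open NormedSpace

variable {E F : Type*} [NormedAddCommGroup E] [NormedSpace ℝ E] [CompleteSpace E]
  [NormedAddCommGroup F] [NormedSpace ℝ F] [CompleteSpace F]

lemma summable_expSeries_apply (T : E →L[ℝ] E) (x : E) :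
    Summable fun k : ℕ => (k.factorial : ℝ)⁻¹ • ((T ^ k) x) := by
  have hs : Summable fun k : ℕ => (k.factorial : ℝ)⁻¹ • T ^ k :=
    NormedSpace.expSeries_summable' (𝕂 := ℝ) T
  have := hs.map (ContinuousLinearMap.apply ℝ E x)
    (ContinuousLinearMap.apply ℝ E x).continuous
  exact this

lemma exp_clm_apply (T : E →L[ℝ] E) (x : E) :
    NormedSpace.exp T x = ∑' k : ℕ, (k.factorial : ℝ)⁻¹ • ((T ^ k) x) := by
  rw [NormedSpace.exp_eq_tsum ℝ]
  have := (ContinuousLinearMap.apply ℝ E x).map_tsum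
    (NormedSpace.expSeries_summable' (𝕂 := ℝ) T)
  simpa using this

lemma exp_clm_intertwine (ψ : E →L[ℝ] F) (T₁ : E →L[ℝ] E) (T₂ : F →L[ℝ] F)
    (hcomm : ∀ y, ψ (T₁ y) = T₂ (ψ y)) (x : E) :
    ψ (NormedSpace.exp T₁ x) = NormedSpace.exp T₂ (ψ x) := by
  have hpow : ∀ (k : ℕ) (y : E), ψ ((T₁ ^ k) y) = (T₂ ^ k) (ψ y) := by
    intro k
    induction k with
    | zero => intro y; simp
    | succ k ih =>
      intro y
      rw [pow_succ, pow_succ, ContinuousLinearMap.mul_apply, ContinuousLinearMap.mul_apply,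
        ih, hcomm]
  rw [exp_clm_apply, exp_clm_apply, ψ.map_tsum (summable_expSeries_apply T₁ x)]
  exact tsum_congr fun k => by rw [_root_.map_smul, hpow]

end ExpHelpers

section MatrixExpHelpers

open NormedSpace

variable {l m n : Type*} [Fintype l] [Fintype m] [Fintype n] [DecidableEq m]

lemma matrix_exp_eq_tsum (B : Matrix m m ℝ) :
    NormedSpace.exp B = ∑' k : ℕ, (k.factorial : ℝ)⁻¹ • B ^ k := by
  rw [NormedSpace.exp_eq_tsum ℝ]

lemma summable_matrix_expSeries (B : Matrix m m ℝ) :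
    Summable fun k : ℕ => (k.factorial : ℝ)⁻¹ • B ^ k := by
  have := summable_expSeries_apply (lmulC m B) (1 : Matrix m m ℝ)
  refine this.congr fun k => ?_
  erw [lmulC_pow, Matrix.mul_one]

lemma exp_lmulC_apply (B : Matrix m m ℝ) (Y : Matrix m n ℝ) :
    NormedSpace.exp (lmulC n B) Y = NormedSpace.exp B * Y := by
  rw [exp_clm_apply,  matrix_exp_eq_tsum]
  rw [show (∑' k : ℕ, (k.factorial : ℝ)⁻¹ • B ^ k) * Y
      = rmulC m Y (∑' k : ℕ, (k.factorial : ℝ)⁻¹ • B ^ k) from rfl,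
    (rmulC m Y).map_tsum (summable_matrix_expSeries B)]
  exact tsum_congr fun k => by rw [lmulC_pow]; simp [Matrix.smul_mul]

lemma exp_rmulC_apply (B : Matrix m m ℝ) (Y : Matrix l m ℝ) :
    NormedSpace.exp (rmulC l B) Y = Y * NormedSpace.exp B := by
  rw [exp_clm_apply,  matrix_exp_eq_tsum]
  rw [show Y * (∑' k : ℕ, (k.factorial : ℝ)⁻¹ • B ^ k)
      = lmulC m Y (∑' k : ℕ, (k.factorial : ℝ)⁻¹ • B ^ k) from rfl,
    (lmulC m Y).map_tsum (summable_matrix_expSeries B)]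
  exact tsum_congr fun k => by rw [rmulC_pow]; simp [Matrix.mul_smul]

lemma matrix_exp_comm [DecidableEq l] (P : Matrix l m ℝ) (B : Matrix m m ℝ)
    (B' : Matrix l l ℝ) (hc : P * B = B' * P) :
    P * NormedSpace.exp B = NormedSpace.exp B' * P := by
  have h1 : ∀ y : Matrix m m ℝ,
      (lmulC m P) ((lmulC m B) y) = (lmulC m B') ((lmulC m P) y) := by
    intro y
    simp only [lmulC_apply, ← Matrix.mul_assoc, hc]
  have := exp_clm_intertwine (lmulC m P) (lmulC m B) (lmulC m B') h1 (1 : Matrix m m ℝ)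
  simpa [exp_lmulC_apply] using this

end MatrixExpHelpers

section ODE

open NormedSpace

variable {E : Type*} [NormedAddCommGroup E] [NormedSpace ℝ E] [CompleteSpace E]

lemma exp_smul_mul_exp_smul_neg (T : E →L[ℝ] E) (t : ℝ) :
    NormedSpace.exp (t • T) * NormedSpace.exp (t • -T) = 1 := by
  rw [← NormedSpace.exp_add_of_commute (((Commute.refl T).neg_right).smul_left t |>.smul_right t)]
  simp [smul_neg, NormedSpace.exp_zero]

lemma ode_uniq (T : E →L[ℝ] E) (G : E) (f g : ℝ → E)
    (hf : ∀ t, HasDerivAt f (T (f t) + G) t) (hg : ∀ t, HasDerivAt g (T (g t) + G) t)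
    (h0 : f 0 = g 0) (t : ℝ) : f t = g t := by
  set w : ℝ → E := fun s => NormedSpace.exp (s • -T) (f s - g s) with hw_def
  have hw : ∀ s, HasDerivAt w 0 s := by
    intro s
    have hc : HasDerivAt (fun u : ℝ => NormedSpace.exp (u • -T))
        (-T * NormedSpace.exp (s • -T)) s := hasDerivAt_exp_smul_const' (-T) s
    have hu : HasDerivAt (fun u => f u - g u) (T (f s - g s)) s := by
      have := (hf s).sub (hg s)
      simpa [map_sub, add_sub_add_right_eq_sub, Pi.sub_def] using this
    have H := hc.clm_apply hu
    have hcm : NormedSpace.exp (s • -T) * T = T * NormedSpace.exp (s • -T) :=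
      (((Commute.refl T).neg_left).smul_left s).exp_left
    convert H using 1
    have h2 : NormedSpace.exp (s • -T) (T (f s - g s))
        = T (NormedSpace.exp (s • -T) (f s - g s)) := by
      rw [← ContinuousLinearMap.mul_apply, hcm, ContinuousLinearMap.mul_apply]
    rw [h2]
    simp [ContinuousLinearMap.mul_apply]
  have hconst : w t = w 0 :=
    is_const_of_deriv_eq_zero (fun s => (hw s).differentiableAt) (fun s => (hw s).deriv) t 0
  have h0' : w 0 = 0 := by
    simp [hw_def, h0, sub_self]
  have hwt : NormedSpace.exp (t • -T) (f t - g t) = 0 := hconst.trans h0'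
  have : f t - g t = 0 := by
    have h3 : NormedSpace.exp (t • T) (NormedSpace.exp (t • -T) (f t - g t)) = f t - g t := by
      rw [← ContinuousLinearMap.mul_apply, exp_smul_mul_exp_smul_neg]
      simp
    rw [hwt] at h3
    simpa using h3.symm
  have := sub_eq_zero.mp this
  exact this

end ODE

end NormTop

/-- The `φ`-functions of a continuous linear endomorphism `L`:
`φ₀(L) = e^{L}` and `φⱼ(L) = ∫₀¹ e^{(1−θ)L}·θ^{j−1}/(j−1)! dθ` for `j ≥ 1`. -/
noncomputable def phi {V : Type*} [NormedAddCommGroup V] [NormedSpace ℝ V]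
    (j : ℕ) (L : V →L[ℝ] V) : V →L[ℝ] V :=
  if j = 0 then NormedSpace.exp L
  else ∫ θ in (0:ℝ)..1,
    (θ ^ (j - 1) / (Nat.factorial (j - 1) : ℝ)) • NormedSpace.exp ((1 - θ) • L)

section NormTop

attribute [-instance] instTopologicalSpaceMatrix Matrix.instUniformSpace

attribute [local instance] matNormTopRing

theorem exp_euler_step_via_block_matrix_aux (M N : ℕ)
    (A : Matrix (Fin M) (Fin M) ℝ) (D : Matrix (Fin N) (Fin N) ℝ)
    (G X : Matrix (Fin M) (Fin N) ℝ) (h : ℝ) (hh : 0 < h)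
    (S : Matrix (Fin M) (Fin N) ℝ →L[ℝ] Matrix (Fin M) (Fin N) ℝ)
    (hS : ∀ Y, S Y = A * Y + Y * D) :
    @NormedSpace.exp _ _ _ (by exact (@NonUnitalSeminormedRing.toIsTopologicalRing _
      (@ContinuousLinearMap.toNormedRing ℝ (Matrix (Fin M) (Fin N) ℝ) _ _
        _).toNonUnitalNormedRing.toNonUnitalSeminormedRing)) (h • S) X + h • phi 1 (h • S) G =
      (Matrix.fromCols (1 : Matrix (Fin M) (Fin M) ℝ) (0 : Matrix (Fin M) (Fin N) ℝ) *
        NormedSpace.exp (h • Matrix.fromBlocks A G 0 (-D)) *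
        Matrix.fromRows X (1 : Matrix (Fin N) (Fin N) ℝ)) *
      NormedSpace.exp (h • D) := by
  classical
  set P : Matrix (Fin M) (Fin M ⊕ Fin N) ℝ := fromCols 1 0 with hP
  set Q : Matrix (Fin M ⊕ Fin N) (Fin N) ℝ := fromRows X 1 with hQ
  set 𝔸 : Matrix (Fin M ⊕ Fin N) (Fin M ⊕ Fin N) ℝ := fromBlocks A G 0 (-D) with h𝔸
  set Pb : Matrix (Fin N) (Fin M ⊕ Fin N) ℝ := fromCols 0 1 with hPb
  -- block matrix identities
  have hPQ : P * Q = X := by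
    rw [hP, hQ, fromCols_mul_fromRows]; simp
  have hPbQ : Pb * Q = (1 : Matrix (Fin N) (Fin N) ℝ) := by
    rw [hPb, hQ, fromCols_mul_fromRows]; simp
  have hP𝔸 : P * 𝔸 = A * P + G * Pb := by
    rw [hP, hPb, h𝔸, fromCols_mul_fromBlocks, mul_fromCols, mul_fromCols]
    ext i (j | j) <;> simp
  have hPb𝔸 : Pb * 𝔸 = (-D) * Pb := by
    rw [hPb, h𝔸, fromCols_mul_fromBlocks, mul_fromCols]
    ext i (j | j) <;> simp
  -- continuity facts
  have hcont1 : Continuous fun s : ℝ => NormedSpace.exp (s • -S) G :=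
    (ContinuousLinearMap.apply ℝ _ G).continuous.comp
      (NormedSpace.exp_continuous.comp (continuous_id.smul continuous_const))
  set C : ℝ → Matrix (Fin M) (Fin N) ℝ :=
    fun t => ∫ s in (0:ℝ)..t, NormedSpace.exp (s • -S) G with hC_def
  set g : ℝ → Matrix (Fin M) (Fin N) ℝ :=
    fun t => NormedSpace.exp (t • S) (X + C t) with hg_def
  have hgderiv : ∀ t, HasDerivAt g (S (g t) + G) t := by
    intro t
    have hCd : HasDerivAt C (NormedSpace.exp (t • -S) G) t :=
      (hcont1.integral_hasStrictDerivAt 0 t).hasDerivAt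
    have hc : HasDerivAt (fun u : ℝ => NormedSpace.exp (u • S))
        (S * NormedSpace.exp (t • S)) t := hasDerivAt_exp_smul_const' S t
    have H := hc.clm_apply (hCd.const_add X)
    refine H.congr_deriv (Eq.symm ?_)
    have h2 : NormedSpace.exp (t • S) (NormedSpace.exp (t • -S) G) = G := by
      rw [← ContinuousLinearMap.mul_apply, exp_smul_mul_exp_smul_neg]; simp
    rw [h2]
    simp [hg_def, ContinuousLinearMap.mul_apply]
  -- block side function
  set L𝔸 := lmulC (Fin N) 𝔸 with hL𝔸
  set RD := rmulC (Fin M) D with hRD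
  set f : ℝ → Matrix (Fin M) (Fin N) ℝ :=
    fun t => NormedSpace.exp (t • RD) (lmulC (Fin N) P (NormedSpace.exp (t • L𝔸) Q))
    with hf_def
  have hEt : ∀ t : ℝ, NormedSpace.exp (t • L𝔸) Q = NormedSpace.exp (t • 𝔸) * Q := by
    intro t
    rw [hL𝔸, smul_lmulC, exp_lmulC_apply]
  have hfmat : ∀ t : ℝ,
      f t = (P * (NormedSpace.exp (t • 𝔸) * Q)) * NormedSpace.exp (t • D) := by
    intro t
    simp only [hf_def]
    rw [hEt t, hRD, smul_rmulC, exp_rmulC_apply, lmulC_apply]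
  have hPbEt : ∀ t : ℝ, Pb * (NormedSpace.exp (t • 𝔸) * Q) = NormedSpace.exp (t • -D) := by
    intro t
    have h1 : Pb * NormedSpace.exp (t • 𝔸) = NormedSpace.exp (t • -D) * Pb :=
      matrix_exp_comm Pb (t • 𝔸) (t • -D)
        (by rw [Matrix.mul_smul, Matrix.smul_mul, hPb𝔸])
    rw [← Matrix.mul_assoc, h1, Matrix.mul_assoc, hPbQ, Matrix.mul_one]
  have hDinv : ∀ t : ℝ,
      NormedSpace.exp (t • -D) * NormedSpace.exp (t • D) = (1 : Matrix (Fin N) (Fin N) ℝ) := by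
    intro t
    erw [← Matrix.exp_add_of_commute _ _
      ((((Commute.refl D).neg_left).smul_left t).smul_right t)]
    simp [smul_neg, NormedSpace.exp_zero]
  have hfderiv : ∀ t, HasDerivAt f (S (f t) + G) t := by
    intro t
    have hinner : HasDerivAt (fun u : ℝ => NormedSpace.exp (u • L𝔸) Q)
        ((L𝔸 * NormedSpace.exp (t • L𝔸)) Q) t := by
      simpa using (hasDerivAt_exp_smul_const' L𝔸 t).clm_apply (hasDerivAt_const t Q)
    have hmid : HasDerivAt (fun u : ℝ => lmulC (Fin N) P (NormedSpace.exp (u • L𝔸) Q))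
        (lmulC (Fin N) P ((L𝔸 * NormedSpace.exp (t • L𝔸)) Q)) t := by
      simpa using (hasDerivAt_const t (lmulC (Fin N) P)).clm_apply hinner
    have hout : HasDerivAt (fun u : ℝ => NormedSpace.exp (u • RD))
        (RD * NormedSpace.exp (t • RD)) t := hasDerivAt_exp_smul_const' RD t
    have H := hout.clm_apply hmid
    refine H.congr_deriv (Eq.symm ?_)
    have hfirst : (RD * NormedSpace.exp (t • RD))
        (lmulC (Fin N) P (NormedSpace.exp (t • L𝔸) Q)) = f t * D := by
      rw [ContinuousLinearMap.mul_apply]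
      rw [show NormedSpace.exp (t • RD) (lmulC (Fin N) P (NormedSpace.exp (t • L𝔸) Q))
        = f t from rfl]
      rw [hRD, rmulC_apply]
    have hsecond : NormedSpace.exp (t • RD)
        (lmulC (Fin N) P ((L𝔸 * NormedSpace.exp (t • L𝔸)) Q)) = A * f t + G := by
      rw [ContinuousLinearMap.mul_apply, hEt t, hL𝔸, lmulC_apply, lmulC_apply]
      rw [hRD, smul_rmulC, exp_rmulC_apply]
      rw [← Matrix.mul_assoc P 𝔸 _, hP𝔸, Matrix.add_mul, Matrix.add_mul,
        Matrix.mul_assoc A P _, Matrix.mul_assoc G Pb _, hPbEt t,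
        Matrix.mul_assoc A _ _, Matrix.mul_assoc G _ _, hDinv t, Matrix.mul_one,
        ← hfmat t]
    rw [hfirst, hsecond, hS]
    abel
  -- initial conditions and uniqueness
  have hf0 : f 0 = X := by
    rw [hfmat 0]
    simp [NormedSpace.exp_zero, hPQ]
  have hg0 : g 0 = X := by
    rw [hg_def]
    simp [hC_def, NormedSpace.exp_zero]
  have hfg : g h = f h := ode_uniq S G g f hgderiv hfderiv (hg0.trans hf0.symm) h
  -- identify the φ-term
  have hcont2 : Continuous fun θ : ℝ => NormedSpace.exp ((1 - θ) • (h • S)) :=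
    NormedSpace.exp_continuous.comp ((continuous_const.sub continuous_id).smul continuous_const)
  have hphi1 : phi 1 (h • S) = ∫ θ in (0:ℝ)..1, NormedSpace.exp ((1 - θ) • (h • S)) := by
    simp [phi]
  have hphi : h • phi 1 (h • S) G = NormedSpace.exp (h • S) (C h) := by
    rw [hphi1, ContinuousLinearMap.intervalIntegral_apply (hcont2.intervalIntegrable 0 1) G]
    have e1 : (∫ θ in (0:ℝ)..1, NormedSpace.exp ((1 - θ) • (h • S)) G)
        = ∫ θ in (0:ℝ)..1, NormedSpace.exp ((h - h * θ) • S) G := by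
      apply intervalIntegral.integral_congr
      intro θ _
      beta_reduce
      rw [smul_smul, show (1 - θ) * h = h - h * θ from by ring]
    rw [e1]
    have e2 : (h • ∫ θ in (0:ℝ)..1, NormedSpace.exp ((h - h * θ) • S) G)
        = ∫ s in (0:ℝ)..h, NormedSpace.exp ((h - s) • S) G := by
      have := intervalIntegral.smul_integral_comp_mul_left
        (fun s : ℝ => NormedSpace.exp ((h - s) • S) G) (a := 0) (b := 1) h
      simpa using this
    rw [e2, hC_def]
    have hcont3 : Continuous fun s : ℝ => NormedSpace.exp (s • -S) G := hcont1
    rw [← ContinuousLinearMap.intervalIntegral_comp_comm (NormedSpace.exp (h • S))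
      (hcont3.intervalIntegrable 0 h)]
    apply intervalIntegral.integral_congr
    intro s _
    beta_reduce
    rw [← ContinuousLinearMap.mul_apply, ← NormedSpace.exp_add_of_commute
      ((((Commute.refl S).neg_right).smul_left h).smul_right s)]
    congr 2
    module
  -- conclude
  rw [hphi, ← map_add]
  rw [show NormedSpace.exp (h • S) (X + C h) = g h from rfl, hfg, hfmat h,
    ← Matrix.mul_assoc P _ Q]

end NormTop

/-- With `S` the Sylvester operator `S(Y) = A·Y + Y·D` and
`𝔸 = [[A, G], [0, −D]]`, one has
`e^{hS}(X) + h·φ₁(hS)(G) = ([I_M, 0]·e^{h𝔸}·[X; I_N])·e^{hD}`. -/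
theorem exp_euler_step_via_block_matrix (M N : ℕ)
    (A : Matrix (Fin M) (Fin M) ℝ) (D : Matrix (Fin N) (Fin N) ℝ)
    (G X : Matrix (Fin M) (Fin N) ℝ) (h : ℝ) (hh : 0 < h)
    (S : Matrix (Fin M) (Fin N) ℝ →L[ℝ] Matrix (Fin M) (Fin N) ℝ)
    (hS : ∀ Y, S Y = A * Y + Y * D) :
    @NormedSpace.exp _ _ _ (by exact (@NonUnitalSeminormedRing.toIsTopologicalRing _
      (@ContinuousLinearMap.toNormedRing ℝ (Matrix (Fin M) (Fin N) ℝ) _ _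
        _).toNonUnitalNormedRing.toNonUnitalSeminormedRing)) (h • S) X + h • phi 1 (h • S) G =
      (Matrix.fromCols (1 : Matrix (Fin M) (Fin M) ℝ) (0 : Matrix (Fin M) (Fin N) ℝ) *
        NormedSpace.exp (h • Matrix.fromBlocks A G 0 (-D)) *
        Matrix.fromRows X (1 : Matrix (Fin N) (Fin N) ℝ)) *
      NormedSpace.exp (h • D) :=
  exp_euler_step_via_block_matrix_aux M N A D G X h hh S hS
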